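/- arXiv:2511.13847 — 2 statements merged into one kernel-verified Lean document; each statement's English description precedes it below -/
import Mathlib

section
/- Let Σ₁, Σ₂ ∈ 𝕊^d be symmetric positive definite with precision matrices Σ₁^{-1}, Σ₂^{-1} having sparsity pattern G (a graph on {1,…,d}), and let p be a polynomial of degree k. Then every entry (i,j) of the matrix p(Σ₁^{-1}Σ₂^{-1})·Σ₁^{-1} with dist_G(i,j) > 2k+1 vanishes; equivalently, its projection onto the complement of the sparsity pattern of G^{2k+1} is zero. -/
open Matrix BigOperators

open Classical in
noncomputable def sqrtm {d : ℕ} (A : Matrix (Fin d) (Fin d) ℝ) : Matrix (Fin d) (Fin d) ℝ :=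
  if h : A.PosSemidef then (h.1.eigenvectorUnitary : Matrix (Fin d) (Fin d) ℝ) *
    diagonal ((↑) ∘ (√·) ∘ h.1.eigenvalues) * (star h.1.eigenvectorUnitary : Matrix (Fin d) (Fin d) ℝ)
    else 0

/-- The spectral norm (ℓ²-operator norm) of a real matrix. -/
noncomputable def specNorm {d : ℕ} (M : Matrix (Fin d) (Fin d) ℝ) : ℝ :=
  ‖LinearMap.toContinuousLinearMap (Matrix.toEuclideanLin M)‖

/-- Auxiliary predicate: every nonzero entry of `M` is witnessed by a walk of length ≤ n. -/
def Spar {d : ℕ} (G : SimpleGraph (Fin d)) (n : ℕ) (M : Matrix (Fin d) (Fin d) ℝ) : Prop :=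
  ∀ i j, M i j ≠ 0 → ∃ w : G.Walk i j, w.length ≤ n

lemma Spar.mono {d : ℕ} {G : SimpleGraph (Fin d)} {n m : ℕ} {M : Matrix (Fin d) (Fin d) ℝ}
    (h : Spar G n M) (hnm : n ≤ m) : Spar G m M :=
  fun i j hij => (h i j hij).imp fun _ hw => hw.trans hnm

lemma Spar.mul {d : ℕ} {G : SimpleGraph (Fin d)} {m n : ℕ} {M N : Matrix (Fin d) (Fin d) ℝ}
    (hM : Spar G m M) (hN : Spar G n N) : Spar G (m + n) (M * N) := by
  intro i j hij
  rw [Matrix.mul_apply] at hij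
  obtain ⟨l, _, hl⟩ := Finset.exists_ne_zero_of_sum_ne_zero hij
  obtain ⟨w1, hw1⟩ := hM i l (fun h => hl (by rw [h, zero_mul]))
  obtain ⟨w2, hw2⟩ := hN l j (fun h => hl (by rw [h, mul_zero]))
  exact ⟨w1.append w2, by rw [SimpleGraph.Walk.length_append]; omega⟩

lemma Spar.one {d : ℕ} {G : SimpleGraph (Fin d)} : Spar G 0 (1 : Matrix (Fin d) (Fin d) ℝ) := by
  intro i j hij
  have : i = j := by
    by_contra h
    exact hij (Matrix.one_apply_ne h)
  subst this
  exact ⟨SimpleGraph.Walk.nil, le_refl _⟩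

lemma Spar.pow {d : ℕ} {G : SimpleGraph (Fin d)} {n : ℕ} {M : Matrix (Fin d) (Fin d) ℝ}
    (hM : Spar G n M) : ∀ t : ℕ, Spar G (n * t) (M ^ t) := by
  intro t
  induction t with
  | zero => simpa using Spar.one
  | succ t ih =>
    rw [pow_succ, Nat.mul_succ]
    exact ih.mul hM

lemma Spar.smul {d : ℕ} {G : SimpleGraph (Fin d)} {n : ℕ} {M : Matrix (Fin d) (Fin d) ℝ}
    (hM : Spar G n M) (c : ℝ) : Spar G n (c • M) := by
  intro i j hij
  exact hM i j (fun h => hij (by simp [Matrix.smul_apply, h]))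

lemma Spar.sum {d : ℕ} {G : SimpleGraph (Fin d)} {n : ℕ} {α : Type*} (s : Finset α)
    (f : α → Matrix (Fin d) (Fin d) ℝ) (hf : ∀ a ∈ s, Spar G n (f a)) :
    Spar G n (∑ a ∈ s, f a) := by
  intro i j hij
  rw [Matrix.sum_apply] at hij
  obtain ⟨a, ha, hane⟩ := Finset.exists_ne_zero_of_sum_ne_zero hij
  exact hf a ha i j hane

theorem stmt3 {d : ℕ} (G : SimpleGraph (Fin d))
    (V₁ V₂ : Matrix (Fin d) (Fin d) ℝ) (h1 : V₁.PosDef) (h2 : V₂.PosDef)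
    (hp1 : ∀ i j, i ≠ j → ¬ G.Adj i j → V₁⁻¹ i j = 0)
    (hp2 : ∀ i j, i ≠ j → ¬ G.Adj i j → V₂⁻¹ i j = 0)
    (k : ℕ) (p : Polynomial ℝ) (hdeg : p.natDegree ≤ k) :
    ∀ i j, (∀ w : G.Walk i j, 2 * k + 1 < w.length) →
      (Polynomial.aeval (V₁⁻¹ * V₂⁻¹) p * V₁⁻¹) i j = 0 := by
  classical
  have sp1 : Spar G 1 V₁⁻¹ := by
    intro i j hij
    by_cases h : i = j
    · subst h; exact ⟨SimpleGraph.Walk.nil, by simp⟩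
    · by_cases hadj : G.Adj i j
      · exact ⟨SimpleGraph.Walk.cons hadj SimpleGraph.Walk.nil, le_refl _⟩
      · exact absurd (hp1 i j h hadj) hij
  have sp2 : Spar G 1 V₂⁻¹ := by
    intro i j hij
    by_cases h : i = j
    · subst h; exact ⟨SimpleGraph.Walk.nil, by simp⟩
    · by_cases hadj : G.Adj i j
      · exact ⟨SimpleGraph.Walk.cons hadj SimpleGraph.Walk.nil, le_refl _⟩
      · exact absurd (hp2 i j h hadj) hij
  have spAB : Spar G 2 (V₁⁻¹ * V₂⁻¹) := sp1.mul sp2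
  have spP : Spar G (2 * k) (Polynomial.aeval (V₁⁻¹ * V₂⁻¹) p) := by
    rw [Polynomial.aeval_eq_sum_range' (Nat.lt_succ_of_le hdeg)]
    apply Spar.sum
    intro t ht
    have : Spar G (2 * t) ((V₁⁻¹ * V₂⁻¹) ^ t) := spAB.pow t
    exact (this.smul _).mono (by
      have := Finset.mem_range.mp ht; omega)
  have spFinal : Spar G (2 * k + 1) (Polynomial.aeval (V₁⁻¹ * V₂⁻¹) p * V₁⁻¹) := spP.mul sp1
  intro i j hij
  by_contra hne
  obtain ⟨w, hw⟩ := spFinal i j hne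
  exact absurd (hij w) (by omega)
end

section
/- Let μ = N(m₁, Σ₁) and ν = N(m₂, Σ₂) be Gaussian measures on ℝ^d with Σ₁, Σ₂ positive definite. Define Λ₁ = Σ₁^{-1/2}(Σ₁^{1/2} Σ₂ Σ₁^{1/2})^{1/2} Σ₁^{-1/2} and Λ₂ = Σ₁^{1/2}(Σ₁^{1/2} Σ₂ Σ₁^{1/2})^{-1/2} Σ₁^{1/2}. Then the 2d×2d block matrix [[Λ₁, −I],[−I, Λ₂]] is positive semidefinite. -/
open Matrix BigOperators

lemma psd_isUnit_posDef {d : ℕ} {A : Matrix (Fin d) (Fin d) ℝ}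
    (hA : A.PosSemidef) (h : IsUnit A) : A.PosDef := by
  exact hA.posDef_iff_isUnit.mpr h

lemma conj_posDef {d : ℕ} {A B : Matrix (Fin d) (Fin d) ℝ}
    (hA : A.PosDef) (hB : B.IsHermitian) (hu : IsUnit B) : (B * A * B).PosDef := by
  apply psd_isUnit_posDef
  · have := hA.posSemidef.mul_mul_conjTranspose_same B
    rwa [hB.eq] at this
  · exact (hu.mul hA.isUnit).mul hu

lemma sqrt_posDef {d : ℕ} {A : Matrix (Fin d) (Fin d) ℝ} (hA : A.PosDef) :
    (sqrtm A).PosDef := by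
  rw [sqrtm, dif_pos hA.posSemidef]
  refine (Matrix.IsUnit.posDef_star_right_conjugate_iff (Unitary.isUnit_coe
    (U := hA.posSemidef.1.eigenvectorUnitary))).mpr ?_
  rw [posDef_diagonal_iff]
  intro i
  simpa [Real.sqrt_pos] using hA.eigenvalues_pos i

theorem stmt5 {d : ℕ} (V₁ V₂ : Matrix (Fin d) (Fin d) ℝ)
    (h1 : V₁.PosDef) (h2 : V₂.PosDef) :
    (Matrix.fromBlocks
      ((sqrtm V₁)⁻¹ * sqrtm (sqrtm V₁ * V₂ * sqrtm V₁) * (sqrtm V₁)⁻¹) (-1) (-1)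
      (sqrtm V₁ * (sqrtm (sqrtm V₁ * V₂ * sqrtm V₁))⁻¹ * sqrtm V₁)).PosSemidef := by
  have hSdef : sqrtm V₁ = sqrtm V₁ := rfl
  set S : Matrix (Fin d) (Fin d) ℝ := sqrtm V₁ with hSs
  have hS : S.PosDef := hSdef ▸ sqrt_posDef h1
  have hM0 : (S * V₂ * S).PosDef := conj_posDef h2 hS.isHermitian hS.isUnit
  have hMdef : sqrtm (S * V₂ * S) = sqrtm (S * V₂ * S) := rfl
  set M : Matrix (Fin d) (Fin d) ℝ := sqrtm (S * V₂ * S) with hMs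
  have hM : M.PosDef := hMdef ▸ sqrt_posDef hM0
  have hSinv : (S⁻¹).PosDef := hS.inv
  have hΛ₁ : (S⁻¹ * M * S⁻¹).PosDef := conj_posDef hM hSinv.isHermitian hSinv.isUnit
  have : Invertible (S⁻¹ * M * S⁻¹) := hΛ₁.isUnit.invertible
  have hdetS : IsUnit S.det := hS.det_pos.ne'.isUnit
  have hinv : (S⁻¹ * M * S⁻¹)⁻¹ = S * M⁻¹ * S := by
    rw [Matrix.mul_inv_rev, Matrix.mul_inv_rev,
      Matrix.nonsing_inv_nonsing_inv S hdetS, ← mul_assoc]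
  have key := (Matrix.PosDef.fromBlocks₁₁ (-1) (S * M⁻¹ * S) hΛ₁).mpr ?_
  · simpa using key
  · rw [hinv]
    have : (-1 : Matrix (Fin d) (Fin d) ℝ)ᴴ * (S * M⁻¹ * S) * (-1) = S * M⁻¹ * S := by
      simp
    rw [this, sub_self]
    exact Matrix.PosSemidef.zero
end
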